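/- Let ν be a Borel probability measure on Σ^∞ and let s < s' be real numbers such that for every n ∈ ℕ and every w ∈ Σ^n, if ν(C_w) > 0 then ν(C_w) ≥ 2^{−s·n}. Define d : Σ^* → [0,∞) by d(w) = 2^{s'·|w|}·ν(C_w). Then d is an s'-gale, and ν({X ∈ Σ^∞ : limsup_{n→∞} d(X↾n) = ∞}) = 1. -/

import Mathlib

open Filter MeasureTheory
open scoped ENNReal

/-- The first `n` bits of an infinite binary sequence, as a finite string. -/
def pre (X : ℕ → Bool) (n : ℕ) : List Bool := List.ofFn (fun i : Fin n => X i)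

/-- The cylinder set of a finite binary string. -/
def cyl (w : List Bool) : Set (ℕ → Bool) := {X | pre X w.length = w}

lemma pre_length (X : ℕ → Bool) (n : ℕ) : (pre X n).length = n := by simp [pre]

lemma pre_succ (X : ℕ → Bool) (n : ℕ) : pre X (n+1) = pre X n ++ [X n] := by
  simp [pre, List.ofFn_succ', -List.ofFn_succ, List.concat_eq_append]

lemma mem_cyl_self (X : ℕ → Bool) (n : ℕ) : X ∈ cyl (pre X n) := by
  show pre X (pre X n).length = pre X n
  rw [pre_length]

lemma mem_cyl_append (X : ℕ → Bool) (w : List Bool) (b : Bool) :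
    X ∈ cyl (w ++ [b]) ↔ X ∈ cyl w ∧ X w.length = b := by
  show pre X (w ++ [b]).length = w ++ [b] ↔ _
  rw [List.length_append, List.length_singleton, pre_succ]
  constructor
  · intro h
    obtain ⟨h1, h2⟩ := List.append_inj' h rfl
    exact ⟨h1, by simpa using h2⟩
  · rintro ⟨h1, h2⟩
    rw [show pre X w.length = w from h1, h2]

lemma cyl_union (w : List Bool) :
    cyl w = cyl (w ++ [false]) ∪ cyl (w ++ [true]) := by
  ext X
  simp only [Set.mem_union, mem_cyl_append]
  cases h : X w.length <;> tauto

lemma measurableSet_cyl (w : List Bool) : MeasurableSet (cyl w) := by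
  have : cyl w = ⋂ i : Fin w.length, {X : ℕ → Bool | X i = w.get i} := by
    ext X
    simp only [cyl, Set.mem_iInter, Set.mem_setOf_eq]
    constructor
    · intro h i
      have : (pre X w.length).get (Fin.cast (pre_length X w.length).symm i) = w.get i := by
        simp [h]
      simp [pre, List.get_ofFn] at this
      exact this
    · intro h
      apply List.ext_get (by simp [pre])
      intro i h1 h2
      simpa [pre, List.get_ofFn] using h ⟨i, h2⟩
  rw [this]
  exact MeasurableSet.iInter fun i => measurable_pi_apply (i:ℕ) (MeasurableSet.singleton _)

lemma cyl_disjoint (w : List Bool) :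
    Disjoint (cyl (w ++ [false])) (cyl (w ++ [true])) := by
  rw [Set.disjoint_left]
  intro X h0 h1
  have := ((mem_cyl_append X w false).1 h0).2
  have := ((mem_cyl_append X w true).1 h1).2
  simp_all

/-- If every cylinder of positive `ν`-measure has measure at least `2^{-s|w|}` and `s < s'`, then
`d w = 2^{s'|w|} ν(C_w)` is an `s'`-gale whose capital is unbounded `ν`-almost surely. -/
theorem gale_from_short_seed_distribution
    (ν : Measure (ℕ → Bool)) [IsProbabilityMeasure ν]
    (s s' : ℝ) (hss' : s < s')
    (hν : ∀ w : List Bool, 0 < ν (cyl w) →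
      (2 : ℝ≥0∞) ^ (-(s * (w.length : ℝ))) ≤ ν (cyl w))
    (d : List Bool → ℝ)
    (hd : ∀ w, d w = 2 ^ (s' * (w.length : ℝ)) * (ν (cyl w)).toReal) :
    (∀ w, d (w ++ [false]) + d (w ++ [true]) = 2 ^ s' * d w) ∧
    ν {X : ℕ → Bool | ∀ C : ℝ, ∃ᶠ n in atTop, C < d (pre X n)} = 1 := by
  constructor
  · intro w
    have hadd : ν (cyl (w ++ [false])) + ν (cyl (w ++ [true])) = ν (cyl w) := by
      rw [cyl_union w, measure_union (cyl_disjoint w) (measurableSet_cyl _)]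
    have htr : (ν (cyl (w ++ [false]))).toReal + (ν (cyl (w ++ [true]))).toReal
        = (ν (cyl w)).toReal := by
      rw [← ENNReal.toReal_add (measure_ne_top ν _) (measure_ne_top ν _), hadd]
    have hlen : ∀ b : Bool, ((w ++ [b]).length : ℝ) = (w.length : ℝ) + 1 := by
      intro b; push_cast [List.length_append, List.length_singleton]; ring
    rw [hd, hd, hd, hlen, hlen]
    have h2 : (2:ℝ) ^ (s' * ((w.length:ℝ) + 1)) = 2 ^ s' * 2 ^ (s' * (w.length:ℝ)) := by
      rw [← Real.rpow_add two_pos]; ring_nf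
    rw [h2, ← htr]; ring
  · set U := ⋃ w ∈ {w : List Bool | ν (cyl w) = 0}, cyl w with hU
    have hUmeas : MeasurableSet U :=
      MeasurableSet.biUnion (Set.to_countable _) fun w _ => measurableSet_cyl w
    have hU0 : ν U = 0 :=
      (measure_biUnion_null_iff (Set.to_countable _)).2 fun w hw => hw
    have hsub : Uᶜ ⊆ {X : ℕ → Bool | ∀ C : ℝ, ∃ᶠ n in atTop, C < d (pre X n)} := by
      intro X hX C
      have hpos : ∀ n, 0 < ν (cyl (pre X n)) := by
        intro n
        rcases eq_or_lt_of_le (zero_le : 0 ≤ ν (cyl (pre X n))) with h | h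
        · have hw : pre X n ∈ {w : List Bool | ν (cyl w) = 0} := h.symm
          exact absurd (Set.mem_biUnion hw (mem_cyl_self X n)) hX
        · exact h
      have hbound : ∀ n : ℕ, (2:ℝ) ^ ((s' - s) * n) ≤ d (pre X n) := by
        intro n
        have h1 := hν _ (hpos n)
        rw [pre_length] at h1
        have h2 : (2:ℝ) ^ (-(s * (n:ℝ))) ≤ (ν (cyl (pre X n))).toReal := by
          have := ENNReal.toReal_mono (measure_ne_top ν _) h1
          rwa [← ENNReal.toReal_rpow, ENNReal.toReal_ofNat] at this
        rw [hd, pre_length]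
        calc (2:ℝ) ^ ((s' - s) * n) = 2 ^ (s' * n) * 2 ^ (-(s * (n:ℝ))) := by
              rw [← Real.rpow_add two_pos]; ring_nf
          _ ≤ 2 ^ (s' * (n:ℝ)) * (ν (cyl (pre X n))).toReal := by
              exact mul_le_mul_of_nonneg_left h2 (Real.rpow_nonneg (by norm_num) _)
      have htend : Tendsto (fun n : ℕ => (2:ℝ) ^ ((s' - s) * n)) atTop atTop := by
        have h1 : Tendsto (fun n : ℕ => (s' - s) * (n:ℝ)) atTop atTop :=
          tendsto_natCast_atTop_atTop.const_mul_atTop (sub_pos.2 hss')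
        have h2 : Tendsto (fun x : ℝ => (2:ℝ) ^ x) atTop atTop := by
          simp_rw [Real.rpow_def_of_pos two_pos]
          exact Real.tendsto_exp_atTop.comp (tendsto_id.const_mul_atTop (Real.log_pos one_lt_two))
        exact h2.comp h1
      exact ((htend.eventually (eventually_gt_atTop C)).mono
        (fun n hn => lt_of_lt_of_le hn (hbound n))).frequently
    refine le_antisymm prob_le_one ?_
    calc (1:ℝ≥0∞) = ν Uᶜ := by
          rw [measure_compl hUmeas (measure_ne_top ν _), hU0, measure_univ]; simp
      _ ≤ _ := measure_mono hsub
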